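/- For every natural number n, the n-th symmetric product SP^n(ℂP¹) of the complex projective line is homeomorphic to the complex projective space ℂPⁿ. -/

import Mathlib

open CategoryTheory
open scoped LinearAlgebra.Projectivization

noncomputable section

/-- The setoid on `Fin n → X` identifying two tuples when they differ by a
permutation of the coordinates. -/
def symmSetoid (n : ℕ) (X : Type*) : Setoid (Fin n → X) where
  r x y := ∃ γ : Equiv.Perm (Fin n), x ∘ γ = y
  iseqv := by
    constructor
    · intro x; exact ⟨1, rfl⟩
    · rintro x y ⟨γ, rfl⟩
      exact ⟨γ⁻¹, by ext i; simp⟩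
    · rintro x y z ⟨γ, rfl⟩ ⟨δ, rfl⟩
      exact ⟨γ * δ, by ext i; simp⟩

/-- The `n`-th symmetric product of a topological space: the quotient of `X^n`
by the full symmetric group, with the quotient topology. -/
def SymmProd (n : ℕ) (X : Type*) [TopologicalSpace X] : Type _ :=
  Quotient (symmSetoid n X)

instance (n : ℕ) (X : Type*) [TopologicalSpace X] : TopologicalSpace (SymmProd n X) :=
  instTopologicalSpaceQuotient

/-- The quotient topology on a projectivization. -/
instance (K V : Type*) [DivisionRing K] [AddCommGroup V] [Module K V]
    [TopologicalSpace V] : TopologicalSpace (ℙ K V) :=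
  instTopologicalSpaceQuotient

/-! ### Auxiliary material -/

open Polynomial Topology

section Aux

/-! #### Permutation extraction from multiset equality -/

lemma map_univ_val_perm {α : Type*} {n : ℕ} (τ : Equiv.Perm (Fin n)) (f : Fin n → α) :
    Multiset.map (f ∘ τ) Finset.univ.val = Multiset.map f Finset.univ.val := by
  have key : (Finset.univ.val.map (τ : Fin n → Fin n)) = Finset.univ.val := by
    simpa using congrArg Finset.val (Finset.map_univ_equiv τ)
  calc Multiset.map (f ∘ τ) Finset.univ.val
      = Multiset.map f (Finset.univ.val.map (τ : Fin n → Fin n)) := by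
        rw [Multiset.map_map]
    _ = Multiset.map f Finset.univ.val := by rw [key]

lemma exists_perm_of_map_eq {α : Type*} : ∀ {n : ℕ} (f g : Fin n → α),
    Multiset.map f Finset.univ.val = Multiset.map g Finset.univ.val →
    ∃ γ : Equiv.Perm (Fin n), f ∘ γ = g := by
  intro n
  induction n with
  | zero => intro f g _; exact ⟨1, funext fun i => i.elim0⟩
  | succ n ih =>
    intro f g h
    have hg0 : g 0 ∈ Multiset.map f Finset.univ.val := by
      rw [h]; exact Multiset.mem_map_of_mem _ (Finset.mem_univ_val _)
    obtain ⟨j, -, hj⟩ := Multiset.mem_map.mp hg0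
    set τ : Equiv.Perm (Fin (n+1)) := Equiv.swap 0 j with hτ
    have huniv : (Finset.univ.val : Multiset (Fin (n+1))) =
        0 ::ₘ (Finset.univ.val.map Fin.succ) := by
      rw [Fin.univ_succ]
      rfl
    have h' : Multiset.map (f ∘ τ) Finset.univ.val = Multiset.map g Finset.univ.val := by
      rw [map_univ_val_perm, h]
    rw [huniv, Multiset.map_cons, Multiset.map_cons, Multiset.map_map, Multiset.map_map] at h'
    have hhead : (f ∘ τ) 0 = g 0 := by simp [hτ, hj]
    rw [hhead] at h'
    have htail := (Multiset.cons_inj_right _).mp h'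
    obtain ⟨δ, hδ⟩ := ih (f ∘ τ ∘ Fin.succ) (g ∘ Fin.succ) (by
      simpa [Function.comp] using htail)
    refine ⟨τ * (Equiv.Perm.decomposeFin.symm (0, δ)), funext fun i => ?_⟩
    induction i using Fin.cases with
    | zero => simpa [hτ, hj] using hhead
    | succ i =>
      have := congrFun hδ i
      simpa [Function.comp, Equiv.Perm.decomposeFin_symm_apply_succ] using this

/-! #### The coefficient polynomial of a tuple of vectors in `ℂ²` -/

/-- The linear polynomial attached to a vector in `ℂ²`. -/
def linPoly (v : Fin 2 → ℂ) : Polynomial ℂ := C (v 0) * X + C (v 1)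

lemma linPoly_ne_zero {v : Fin 2 → ℂ} (hv : v ≠ 0) : linPoly v ≠ 0 := by
  intro h
  apply hv
  funext i
  fin_cases i
  · simpa [linPoly] using congrArg (fun p => Polynomial.coeff p 1) h
  · simpa [linPoly] using congrArg (fun p => Polynomial.coeff p 0) h

lemma linPoly_smul (k : ℂ) (v : Fin 2 → ℂ) : linPoly (k • v) = C k * linPoly v := by
  simp only [linPoly, Pi.smul_apply, smul_eq_mul, C_mul, mul_add]
  ring

/-- The product polynomial of a tuple of vectors. -/
def tuplePoly {n : ℕ} (v : Fin n → Fin 2 → ℂ) : Polynomial ℂ := ∏ i, linPoly (v i)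

lemma tuplePoly_ne_zero {n : ℕ} {v : Fin n → Fin 2 → ℂ} (hv : ∀ i, v i ≠ 0) :
    tuplePoly v ≠ 0 :=
  Finset.prod_ne_zero_iff.mpr fun i _ => linPoly_ne_zero (hv i)

lemma prod_natDegree_le {n : ℕ} (v : Fin n → Fin 2 → ℂ) (s : Finset (Fin n)) :
    (∏ i ∈ s, linPoly (v i)).natDegree ≤ s.card := by
  refine le_trans (natDegree_prod_le _ _) ?_
  calc ∑ i ∈ s, (linPoly (v i)).natDegree ≤ ∑ _i ∈ s, 1 :=
        Finset.sum_le_sum fun i _ => natDegree_linear_le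
    _ = s.card := by simp

lemma tuplePoly_natDegree_le {n : ℕ} (v : Fin n → Fin 2 → ℂ) :
    (tuplePoly v).natDegree ≤ n := by
  simpa [tuplePoly] using prod_natDegree_le v Finset.univ

lemma tuplePoly_comp_perm {n : ℕ} (v : Fin n → Fin 2 → ℂ) (γ : Equiv.Perm (Fin n)) :
    tuplePoly (v ∘ γ) = tuplePoly v :=
  Equiv.prod_comp γ (fun i => linPoly (v i))

lemma tuplePoly_smul {n : ℕ} (k : Fin n → ℂ) (v : Fin n → Fin 2 → ℂ) :
    tuplePoly (fun i => k i • v i) = C (∏ i, k i) * tuplePoly v := by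
  simp only [tuplePoly, linPoly_smul, Finset.prod_mul_distrib, map_prod]

/-- The coefficient vector of the product polynomial. -/
def coeffVec {n : ℕ} (v : Fin n → Fin 2 → ℂ) : Fin (n + 1) → ℂ :=
  fun j => (tuplePoly v).coeff j

lemma tuplePoly_eq_of_coeffVec {n : ℕ} (v : Fin n → Fin 2 → ℂ) (q : Polynomial ℂ)
    (hq : q.natDegree ≤ n) (h : ∀ j : Fin (n + 1), coeffVec v j = q.coeff j) :
    tuplePoly v = q := by
  ext m
  rcases le_or_gt m n with hm | hm
  · exact h ⟨m, by omega⟩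
  · rw [coeff_eq_zero_of_natDegree_lt (lt_of_le_of_lt (tuplePoly_natDegree_le v) hm),
      coeff_eq_zero_of_natDegree_lt (lt_of_le_of_lt hq hm)]

lemma coeffVec_ne_zero {n : ℕ} {v : Fin n → Fin 2 → ℂ} (hv : ∀ i, v i ≠ 0) :
    coeffVec v ≠ 0 := by
  intro h
  apply tuplePoly_ne_zero hv
  have := tuplePoly_eq_of_coeffVec v 0 (by simp) (fun j => by
    have := congrFun h j; simpa using this)
  simpa using this

/-! #### Points of `ℂP¹` and the multiset of factors -/

/-- The point at infinity in `ℂP¹`. -/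
def ptInf : ℙ ℂ (Fin 2 → ℂ) :=
  Projectivization.mk ℂ ![0, 1] (by
    intro h; have := congrFun h 1; simp at this)

/-- The point of `ℂP¹` corresponding to a root `r`. -/
def ptRoot (r : ℂ) : ℙ ℂ (Fin 2 → ℂ) :=
  Projectivization.mk ℂ ![1, -r] (by
    intro h; have := congrFun h 0; simp at this)

lemma mk_eq_ptInf {v : Fin 2 → ℂ} (hv : v ≠ 0) (h0 : v 0 = 0) :
    Projectivization.mk ℂ v hv = ptInf := by
  have hv1 : v 1 ≠ 0 := by
    intro h1; apply hv; funext i; fin_cases i <;> simp [h0, h1]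
  rw [ptInf, Projectivization.mk_eq_mk_iff']
  exact ⟨v 1, by funext i; fin_cases i <;> simp [h0]⟩

lemma mk_eq_ptRoot {v : Fin 2 → ℂ} (hv : v ≠ 0) (h0 : v 0 ≠ 0) :
    Projectivization.mk ℂ v hv = ptRoot (-(v 1) / v 0) := by
  rw [ptRoot, Projectivization.mk_eq_mk_iff']
  refine ⟨v 0, ?_⟩
  funext i; fin_cases i
  · simp
  · simp only [Fin.isValue, Pi.smul_apply, Matrix.cons_val_one, Matrix.head_cons,
      smul_eq_mul, neg_neg]
    show v 0 * -(-v 1 / v 0) = v 1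
    simp only [neg_div, neg_neg]
    field_simp

lemma multiset_key {n : ℕ} (v : Fin n → Fin 2 → ℂ) (hv : ∀ i, v i ≠ 0)
    (s : Finset (Fin n)) :
    s.val.map (fun i => Projectivization.mk ℂ (v i) (hv i)) =
      ((∏ i ∈ s, linPoly (v i)).roots.map ptRoot)
      + Multiset.replicate (s.card - (∏ i ∈ s, linPoly (v i)).natDegree) ptInf := by
  classical
  induction s using Finset.induction_on with
  | empty => simp
  | insert a s ha ih =>
    have hQ0 : (∏ i ∈ s, linPoly (v i)) ≠ 0 :=
      Finset.prod_ne_zero_iff.mpr fun i _ => linPoly_ne_zero (hv i)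
    have hdeg := prod_natDegree_le v s
    have hprod : (∏ i ∈ insert a s, linPoly (v i)) = linPoly (v a) * ∏ i ∈ s, linPoly (v i) :=
      Finset.prod_insert ha
    have hval : (insert a s).val = a ::ₘ s.val := Finset.insert_val_of_notMem ha
    have hcard : (insert a s).card = s.card + 1 := Finset.card_insert_of_notMem ha
    rw [hval, Multiset.map_cons, ih, hprod, hcard]
    by_cases h0 : v a 0 = 0
    · have hva1 : v a 1 ≠ 0 := by
        intro h1; apply hv a; funext i; fin_cases i <;> simp [h0, h1]
      have hlin : linPoly (v a) = C (v a 1) := by simp [linPoly, h0]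
      rw [hlin, roots_C_mul _ hva1, natDegree_C_mul hva1, mk_eq_ptInf (hv a) h0]
      have : s.card + 1 - (∏ i ∈ s, linPoly (v i)).natDegree
          = (s.card - (∏ i ∈ s, linPoly (v i)).natDegree) + 1 := by omega
      rw [this, Multiset.replicate_succ]
      simp only [← Multiset.singleton_add]
      rw [← add_assoc, ← add_assoc, add_comm ({ptInf} : Multiset _) _]
    · set r := -(v a 1) / v a 0 with hr
      have hvr : v a 0 * r = -(v a 1) := by rw [hr]; field_simp
      have hlin : linPoly (v a) = C (v a 0) * (X - C r) := by
        rw [linPoly, mul_sub, ← C_mul, hvr]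
        simp [map_neg, sub_neg_eq_add]
      have hlinn : (linPoly (v a)).natDegree = 1 := natDegree_linear h0
      rw [roots_mul (mul_ne_zero (linPoly_ne_zero (hv a)) hQ0),
        natDegree_mul (linPoly_ne_zero (hv a)) hQ0, hlinn]
      rw [hlin, roots_C_mul _ h0, roots_X_sub_C]
      have : s.card + 1 - (1 + (∏ i ∈ s, linPoly (v i)).natDegree)
          = s.card - (∏ i ∈ s, linPoly (v i)).natDegree := by omega
      rw [this, mk_eq_ptRoot (hv a) h0, ← hr]
      rw [Multiset.singleton_add, Multiset.map_cons, Multiset.cons_add]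

/-! #### Injectivity key -/

lemma inj_key {n : ℕ} (v w : Fin n → Fin 2 → ℂ) (hv : ∀ i, v i ≠ 0) (hw : ∀ i, w i ≠ 0)
    (a : ℂ) (ha : a ≠ 0) (h : ∀ j : Fin (n + 1), coeffVec v j = a * coeffVec w j) :
    ∃ γ : Equiv.Perm (Fin n),
      (fun i => Projectivization.mk ℂ (v i) (hv i)) ∘ γ
        = fun i => Projectivization.mk ℂ (w i) (hw i) := by
  have hdegw : (C a * tuplePoly w).natDegree ≤ n := by
    rw [natDegree_C_mul ha]
    exact tuplePoly_natDegree_le w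
  have hpol : tuplePoly v = C a * tuplePoly w :=
    tuplePoly_eq_of_coeffVec v _ hdegw (fun j => by rw [h j, coeff_C_mul]; rfl)
  have hroots : (tuplePoly v).roots = (tuplePoly w).roots := by
    rw [hpol, roots_C_mul _ ha]
  have hdeg : (tuplePoly v).natDegree = (tuplePoly w).natDegree := by
    rw [hpol, natDegree_C_mul ha]
  have m1 := multiset_key v hv Finset.univ
  have m2 := multiset_key w hw Finset.univ
  have : Multiset.map (fun i => Projectivization.mk ℂ (v i) (hv i)) Finset.univ.val =
      Multiset.map (fun i => Projectivization.mk ℂ (w i) (hw i)) Finset.univ.val := by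
    rw [m1, m2]
    have hv' : (∏ i, linPoly (v i)) = tuplePoly v := rfl
    have hw' : (∏ i, linPoly (w i)) = tuplePoly w := rfl
    rw [hv', hw', hroots, hdeg]
  exact exists_perm_of_map_eq _ _ this

/-! #### Surjectivity key -/

lemma list_prod_lemma (L : List ℂ) :
    ∏ i ∈ Finset.range L.length, (X - C (L.getD i 0)) = (L.map fun r => X - C r).prod := by
  induction L with
  | nil => simp
  | cons a L ih =>
    rw [List.length_cons, Finset.prod_range_succ', List.map_cons, List.prod_cons]
    simp only [List.getD_cons_succ, List.getD_cons_zero, ih]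
    ring

lemma surj_key (n : ℕ) (w : Fin (n + 1) → ℂ) (hw : w ≠ 0) :
    ∃ (v : Fin n → Fin 2 → ℂ) (_ : ∀ i, v i ≠ 0) (c : ℂ), c ≠ 0 ∧ coeffVec v = c • w := by
  classical
  set p : Polynomial ℂ := ∑ j : Fin (n + 1), monomial (j : ℕ) (w j) with hp
  have hcoeff : ∀ k : Fin (n + 1), p.coeff k = w k := by
    intro k
    rw [hp, finset_sum_coeff]
    simp only [coeff_monomial, Fin.val_eq_val]
    simp [Finset.sum_ite_eq']
  have hp0 : p ≠ 0 := by
    obtain ⟨j, hj⟩ := Function.ne_iff.mp hw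
    simp only [Pi.zero_apply] at hj
    intro h
    exact hj (by rw [← hcoeff j, h, coeff_zero])
  have hpd : p.natDegree ≤ n := by
    refine natDegree_sum_le_of_forall_le _ _ fun j _ => ?_
    exact le_trans (natDegree_monomial_le _) (by omega)
  have hsplit : p.Splits := IsAlgClosed.splits p
  have hcard : p.roots.card = p.natDegree := (splits_iff_card_roots).mp hsplit
  set L : List ℂ := p.roots.toList with hLdef
  have hL : L.length = p.natDegree := by rw [hLdef, Multiset.length_toList, hcard]
  have hLn : L.length ≤ n := le_trans (le_of_eq hL) hpd
  set v : Fin n → Fin 2 → ℂ := fun i =>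
    if (i : ℕ) < L.length then ![1, -(L.getD i 0)] else ![0, 1] with hvdef
  have hv : ∀ i, v i ≠ 0 := by
    intro i
    rw [hvdef]
    dsimp only
    split
    · intro h; have := congrFun h 0; simp at this
    · intro h; have := congrFun h 1; simp at this
  have hlin1 : ∀ r : ℂ, linPoly ![1, -r] = X - C r := by
    intro r; simp [linPoly, map_neg, sub_eq_add_neg]
  have hlin2 : linPoly ![0, 1] = 1 := by simp [linPoly]
  have htp : tuplePoly v = (p.roots.map fun r => X - C r).prod := by
    have : tuplePoly v = ∏ i : Fin n,
        (fun k : ℕ => if k < L.length then X - C (L.getD k 0) else 1) (i : ℕ) := by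
      refine Finset.prod_congr rfl fun i _ => ?_
      rw [hvdef]
      dsimp only
      split
      · exact hlin1 _
      · exact hlin2
    rw [tuplePoly] at this ⊢
    rw [this, Fin.prod_univ_eq_prod_range
      (fun k : ℕ => if k < L.length then X - C (L.getD k 0) else 1) n]
    rw [← Finset.prod_subset (Finset.range_subset_range.mpr hLn)
      (fun x _ hx => by
        have hxx : ¬ x < L.length := by simpa [Finset.mem_range] using hx
        exact if_neg hxx)]
    have e1 : (∏ x ∈ Finset.range L.length, if x < L.length then X - C (L.getD x 0) else 1)
        = ∏ x ∈ Finset.range L.length, (X - C (L.getD x 0)) :=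
      Finset.prod_congr rfl (fun k hk => if_pos (Finset.mem_range.mp hk))
    rw [e1, list_prod_lemma L, ← Multiset.coe_toList p.roots, Multiset.map_coe,
      Multiset.prod_coe]
  have hlc : p.leadingCoeff ≠ 0 := leadingCoeff_ne_zero.mpr hp0
  have hfact : p = C p.leadingCoeff * (p.roots.map fun r => X - C r).prod :=
    hsplit.eq_prod_roots
  refine ⟨v, hv, p.leadingCoeff⁻¹, inv_ne_zero hlc, ?_⟩
  funext j
  have h2 : p.coeff j = p.leadingCoeff * ((p.roots.map fun r => X - C r).prod).coeff j := by
    conv_lhs => rw [hfact]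
    rw [coeff_C_mul]
  have : (tuplePoly v).coeff j = p.leadingCoeff⁻¹ * p.coeff j := by
    rw [htp, h2, ← mul_assoc, inv_mul_cancel₀ hlc, one_mul]
  rw [coeffVec, this, hcoeff]
  simp

/-! #### Topological facts about projectivizations -/

/-- The quotient map from nonzero vectors to projective space. -/
def projMk (m : ℕ) : {v : Fin m → ℂ // v ≠ 0} → ℙ ℂ (Fin m → ℂ) :=
  fun v => Projectivization.mk ℂ v.1 v.2

lemma projMk_surjective (m : ℕ) : Function.Surjective (projMk m) := by
  intro x
  induction x using Projectivization.ind with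
  | h v hv => exact ⟨⟨v, hv⟩, rfl⟩

lemma projMk_continuous (m : ℕ) : Continuous (projMk m) :=
  continuous_quotient_mk'

lemma projMk_isQuotientMap (m : ℕ) : IsQuotientMap (projMk m) :=
  isQuotientMap_quotient_mk'

/-- Scaling map on nonzero vectors. -/
def scaleMap {m : ℕ} (k : ℂˣ) : {v : Fin m → ℂ // v ≠ 0} → {v : Fin m → ℂ // v ≠ 0} :=
  fun x => ⟨(k : ℂ) • x.1, by
    intro h
    exact x.2 ((smul_eq_zero.mp h).resolve_left (Units.ne_zero k))⟩

lemma scaleMap_continuous {m : ℕ} (k : ℂˣ) : Continuous (scaleMap (m := m) k) :=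
  by unfold scaleMap; exact (continuous_subtype_val.const_smul (k : ℂ)).subtype_mk _

lemma projMk_isOpenMap (m : ℕ) : IsOpenMap (projMk m) := by
  intro U hU
  rw [← (projMk_isQuotientMap m).isOpen_preimage]
  have : projMk m ⁻¹' (projMk m '' U) = ⋃ k : ℂˣ, scaleMap k ⁻¹' U := by
    ext x
    simp only [Set.mem_preimage, Set.mem_image, Set.mem_iUnion]
    constructor
    · rintro ⟨u, hu, huv⟩
      obtain ⟨a, ha⟩ := (Projectivization.mk_eq_mk_iff ℂ _ _ u.2 x.2).mp huv
      refine ⟨a, ?_⟩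
      have : scaleMap a x = u := Subtype.ext (by simpa [scaleMap, Units.smul_def] using ha)
      rwa [this]
    · rintro ⟨k, hk⟩
      refine ⟨scaleMap k x, hk, ?_⟩
      exact (Projectivization.mk_eq_mk_iff ℂ _ _ _ _).mpr ⟨k, rfl⟩
  rw [this]
  exact isOpen_iUnion fun k => (scaleMap_continuous k).isOpen_preimage U hU

lemma projMk_isOpenQuotientMap (m : ℕ) : IsOpenQuotientMap (projMk m) :=
  ⟨projMk_surjective m, projMk_continuous m, projMk_isOpenMap m⟩

lemma proj_rel_closed (m : ℕ) :
    IsClosed {p : {v : Fin m → ℂ // v ≠ 0} × {v : Fin m → ℂ // v ≠ 0} |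
      projMk m p.1 = projMk m p.2} := by
  have : {p : {v : Fin m → ℂ // v ≠ 0} × {v : Fin m → ℂ // v ≠ 0} |
      projMk m p.1 = projMk m p.2} =
      ⋂ i, ⋂ j, {p : {v : Fin m → ℂ // v ≠ 0} × {v : Fin m → ℂ // v ≠ 0} |
        p.1.1 i * p.2.1 j = p.1.1 j * p.2.1 i} := by
    ext ⟨x, y⟩
    simp only [Set.mem_setOf_eq, Set.mem_iInter]
    constructor
    · intro h i j
      obtain ⟨a, ha⟩ := (Projectivization.mk_eq_mk_iff ℂ _ _ x.2 y.2).mp h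
      have hx : x.1 = (a : ℂ) • y.1 := ha.symm
      rw [hx]
      simp only [Pi.smul_apply, smul_eq_mul]
      ring
    · intro h
      obtain ⟨i0, hi0⟩ := Function.ne_iff.mp x.2
      simp only [Pi.zero_apply] at hi0
      have hy0 : y.1 i0 ≠ 0 := by
        intro hy
        apply y.2
        funext j
        have hj := h i0 j
        rw [hy, mul_zero] at hj
        have := mul_eq_zero.mp hj
        simpa [hi0] using this
      refine (Projectivization.mk_eq_mk_iff' ℂ _ _ x.2 y.2).mpr ⟨x.1 i0 / y.1 i0, ?_⟩
      funext j
      simp only [Pi.smul_apply, smul_eq_mul]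
      field_simp
      linear_combination h i0 j
  rw [this]
  refine isClosed_iInter fun i => isClosed_iInter fun j => ?_
  apply isClosed_eq
  · exact ((continuous_apply i).comp (continuous_subtype_val.comp continuous_fst)).mul
      ((continuous_apply j).comp (continuous_subtype_val.comp continuous_snd))
  · exact ((continuous_apply j).comp (continuous_subtype_val.comp continuous_fst)).mul
      ((continuous_apply i).comp (continuous_subtype_val.comp continuous_snd))

instance projT2 (m : ℕ) : T2Space (ℙ ℂ (Fin m → ℂ)) := by
  rw [t2_iff_isClosed_diagonal]
  rw [← isOpen_compl_iff]
  have : (Set.diagonal (ℙ ℂ (Fin m → ℂ)))ᶜ =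
      Prod.map (projMk m) (projMk m) ''
        {p | projMk m p.1 = projMk m p.2}ᶜ := by
    ext ⟨a, b⟩
    simp only [Set.mem_compl_iff, Set.mem_diagonal_iff, Set.mem_image, Prod.exists]
    constructor
    · intro hab
      obtain ⟨x, hx⟩ := projMk_surjective m a
      obtain ⟨y, hy⟩ := projMk_surjective m b
      refine ⟨x, y, ?_, by simp [Prod.map, hx, hy]⟩
      simp only [Set.mem_compl_iff, Set.mem_setOf_eq]
      intro h
      rw [hx, hy] at h
      exact hab h
    · rintro ⟨x, y, hxy, heq⟩
      simp only [Prod.map, Prod.mk.injEq] at heq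
      intro h
      apply hxy
      simp only [Set.mem_compl_iff, Set.mem_setOf_eq, not_not] at *
      rw [heq.1, heq.2, h]
  rw [this]
  exact ((projMk_isOpenMap m).prodMap (projMk_isOpenMap m)) _
    (isOpen_compl_iff.mpr (proj_rel_closed m))

instance cp1_compact : CompactSpace (ℙ ℂ (Fin 2 → ℂ)) := by
  have hc : IsCompact (Metric.sphere (0 : Fin 2 → ℂ) 1) := isCompact_sphere _ _
  set g : Metric.sphere (0 : Fin 2 → ℂ) 1 → ℙ ℂ (Fin 2 → ℂ) := fun x =>
    Projectivization.mk ℂ x.1 (by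
      intro h
      have := x.2
      rw [mem_sphere_iff_norm, h] at this
      simp at this) with hg
  have hgc : Continuous g := by
    apply Continuous.comp (continuous_quotient_mk')
    exact continuous_subtype_val.subtype_mk _
  have hgs : Function.Surjective g := by
    intro y
    induction y using Projectivization.ind with
    | h v hv =>
      have hnv : ‖v‖ ≠ 0 := norm_ne_zero_iff.mpr hv
      set c : ℂ := (‖v‖ : ℂ) with hcdef
      have hc0 : c ≠ 0 := by
        simp [hcdef, hnv]
      have hmem : c⁻¹ • v ∈ Metric.sphere (0 : Fin 2 → ℂ) 1 := by
        rw [mem_sphere_iff_norm, sub_zero, norm_smul, norm_inv, hcdef]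
        rw [Complex.norm_real, Real.norm_eq_abs, abs_of_nonneg (norm_nonneg v)]
        field_simp
      refine ⟨⟨c⁻¹ • v, hmem⟩, ?_⟩
      rw [hg]
      exact (Projectivization.mk_eq_mk_iff' ℂ _ _ _ hv).mpr ⟨c⁻¹, rfl⟩
  constructor
  have : Set.range g = Set.univ := Set.range_eq_univ.mpr hgs
  rw [← this]
  exact (isCompact_range hgc)

/-! #### Continuity of the coefficient map -/

lemma cont_prod_coeff {n : ℕ} (s : Finset (Fin n)) (k : ℕ) :
    Continuous fun v : Fin n → Fin 2 → ℂ => (∏ i ∈ s, linPoly (v i)).coeff k := by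
  classical
  induction s using Finset.induction_on generalizing k with
  | empty => simpa using continuous_const
  | insert a s ha ih =>
    have expand : ∀ v : Fin n → Fin 2 → ℂ,
        (∏ i ∈ insert a s, linPoly (v i)) =
          C (v a 0) * (X * ∏ i ∈ s, linPoly (v i)) + C (v a 1) * ∏ i ∈ s, linPoly (v i) := by
      intro v
      rw [Finset.prod_insert ha, linPoly]
      ring
    have hc0 : Continuous fun v : Fin n → Fin 2 → ℂ => v a 0 :=
      (continuous_apply (0 : Fin 2)).comp (continuous_apply a)
    have hc1 : Continuous fun v : Fin n → Fin 2 → ℂ => v a 1 :=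
      (continuous_apply (1 : Fin 2)).comp (continuous_apply a)
    cases k with
    | zero =>
      have : (fun v : Fin n → Fin 2 → ℂ => (∏ i ∈ insert a s, linPoly (v i)).coeff 0)
          = fun v => v a 1 * (∏ i ∈ s, linPoly (v i)).coeff 0 := by
        funext v
        rw [expand v, coeff_add, coeff_C_mul, coeff_C_mul, coeff_X_mul_zero]
        ring
      rw [this]
      exact hc1.mul (ih 0)
    | succ k =>
      have : (fun v : Fin n → Fin 2 → ℂ => (∏ i ∈ insert a s, linPoly (v i)).coeff (k + 1))
          = fun v => v a 0 * (∏ i ∈ s, linPoly (v i)).coeff k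
              + v a 1 * (∏ i ∈ s, linPoly (v i)).coeff (k + 1) := by
        funext v
        rw [expand v, coeff_add, coeff_C_mul, coeff_C_mul, coeff_X_mul]
      rw [this]
      exact (hc0.mul (ih k)).add (hc1.mul (ih (k + 1)))

/-! #### The map and the proof -/

lemma mk_congr {m : ℕ} (v w : Fin m → ℂ) (hv : v ≠ 0) (hw : w ≠ 0) (h : v = w) :
    Projectivization.mk ℂ v hv = Projectivization.mk ℂ w hw := by
  subst h; rfl

/-- Invariance of the projectivized coefficient vector under rescaling. -/
lemma mk_coeffVec_eq {n : ℕ} (v w : Fin n → Fin 2 → ℂ) (hv : ∀ i, v i ≠ 0)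
    (hw : ∀ i, w i ≠ 0)
    (h : ∀ i, Projectivization.mk ℂ (v i) (hv i) = Projectivization.mk ℂ (w i) (hw i)) :
    Projectivization.mk ℂ (coeffVec v) (coeffVec_ne_zero hv)
      = Projectivization.mk ℂ (coeffVec w) (coeffVec_ne_zero hw) := by
  have hk : ∀ i, ∃ a : ℂˣ, (a : ℂ) • w i = v i := fun i =>
    (Projectivization.mk_eq_mk_iff ℂ _ _ (hv i) (hw i)).mp (h i)
  choose k hk using hk
  have hveq : v = fun i => (k i : ℂ) • w i := funext fun i => (hk i).symm
  have hpol : tuplePoly v = C (∏ i, (k i : ℂ)) * tuplePoly w := by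
    rw [hveq]; exact tuplePoly_smul _ _
  refine (Projectivization.mk_eq_mk_iff' ℂ _ _ _ _).mpr ⟨∏ i, (k i : ℂ), ?_⟩
  funext j
  simp only [Pi.smul_apply, smul_eq_mul]
  rw [coeffVec, coeffVec, hpol, coeff_C_mul]

/-- The tuple-level map to `ℂPⁿ`. -/
def pointsToProj (n : ℕ) (x : Fin n → ℙ ℂ (Fin 2 → ℂ)) : ℙ ℂ (Fin (n + 1) → ℂ) :=
  Projectivization.mk ℂ (coeffVec fun i => (x i).rep)
    (coeffVec_ne_zero fun i => Projectivization.rep_nonzero _)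

lemma pointsToProj_welldef (n : ℕ) (a b : Fin n → ℙ ℂ (Fin 2 → ℂ))
    (h : (symmSetoid n (ℙ ℂ (Fin 2 → ℂ))).r a b) : pointsToProj n a = pointsToProj n b := by
  obtain ⟨γ, hγ⟩ := h
  subst hγ
  apply mk_congr
  funext j
  rw [coeffVec, coeffVec]
  have : (fun i => ((a ∘ γ) i).rep) = (fun i => (a i).rep) ∘ γ := rfl
  rw [this, tuplePoly_comp_perm]

lemma pointsToProj_mk (n : ℕ) (v : Fin n → Fin 2 → ℂ) (hv : ∀ i, v i ≠ 0) :
    pointsToProj n (fun i => Projectivization.mk ℂ (v i) (hv i))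
      = Projectivization.mk ℂ (coeffVec v) (coeffVec_ne_zero hv) := by
  rw [pointsToProj]
  apply mk_coeffVec_eq
  intro i
  exact Projectivization.mk_rep _

lemma pointsToProj_continuous (n : ℕ) : Continuous (pointsToProj n) := by
  have hQ : IsOpenQuotientMap (Pi.map fun _ : Fin n => projMk 2) :=
    IsOpenQuotientMap.piMap fun _ => projMk_isOpenQuotientMap 2
  rw [← hQ.continuous_comp_iff]
  have : (pointsToProj n ∘ Pi.map fun _ : Fin n => projMk 2)
      = fun v : Fin n → {x : Fin 2 → ℂ // x ≠ 0} =>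
        projMk (n + 1) ⟨coeffVec fun i => (v i).1, coeffVec_ne_zero fun i => (v i).2⟩ := by
    funext v
    have : (Pi.map fun _ : Fin n => projMk 2) v
        = fun i => Projectivization.mk ℂ (v i).1 (v i).2 := rfl
    rw [Function.comp_apply, this, pointsToProj_mk]
    rfl
  rw [this]
  apply (projMk_continuous (n + 1)).comp
  apply Continuous.subtype_mk
  apply continuous_pi
  intro j
  have hv : Continuous fun (v : Fin n → {x : Fin 2 → ℂ // x ≠ 0}) (i : Fin n) => (v i).1 :=
    continuous_pi fun i => continuous_subtype_val.comp (continuous_apply i)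
  exact (cont_prod_coeff Finset.univ (j : ℕ)).comp hv

instance symmProd_compactSpace (n : ℕ) (X : Type*) [TopologicalSpace X] [CompactSpace X] :
    CompactSpace (SymmProd n X) :=
  Quotient.compactSpace (s := symmSetoid n X)

end Aux

/-- The `n`-th symmetric product of the complex projective line is homeomorphic
to the `n`-dimensional complex projective space. -/
theorem symmProd_CP1_homeomorph_CPn (n : ℕ) :
    Nonempty (SymmProd n (ℙ ℂ (Fin 2 → ℂ)) ≃ₜ ℙ ℂ (Fin (n + 1) → ℂ)) := by
  classical
  let F : SymmProd n (ℙ ℂ (Fin 2 → ℂ)) → ℙ ℂ (Fin (n + 1) → ℂ) :=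
    Quotient.lift (pointsToProj n) (pointsToProj_welldef n)
  have hFcont : Continuous F := continuous_quot_lift _ (pointsToProj_continuous n)
  have hFinj : Function.Injective F := by
    intro x y h
    induction x using Quotient.ind with | _ u =>
    induction y using Quotient.ind with | _ u' =>
    have h' : pointsToProj n u = pointsToProj n u' := h
    rw [pointsToProj, pointsToProj] at h'
    set v : Fin n → Fin 2 → ℂ := fun i => (u i).rep with hvdef
    set w : Fin n → Fin 2 → ℂ := fun i => (u' i).rep with hwdef
    have hv : ∀ i, v i ≠ 0 := fun i => Projectivization.rep_nonzero _
    have hw : ∀ i, w i ≠ 0 := fun i => Projectivization.rep_nonzero _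
    obtain ⟨a, ha⟩ := (Projectivization.mk_eq_mk_iff' ℂ _ _ _ _).mp h'
    have ha0 : a ≠ 0 := by
      intro h0
      rw [h0, zero_smul] at ha
      exact coeffVec_ne_zero hv ha.symm
    obtain ⟨γ, hγ⟩ := inj_key v w hv hw a ha0 (fun j => by
      have := congrFun ha j
      simpa using this.symm)
    apply Quotient.sound
    refine ⟨γ, funext fun i => ?_⟩
    have := congrFun hγ i
    simp only [Function.comp_apply] at this
    have h1 : Projectivization.mk ℂ (v (γ i)) (hv (γ i)) = u (γ i) :=
      Projectivization.mk_rep _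
    have h2 : Projectivization.mk ℂ (w i) (hw i) = u' i :=
      Projectivization.mk_rep _
    rw [h1, h2] at this
    exact this
  have hFsurj : Function.Surjective F := by
    intro y
    induction y using Projectivization.ind with
    | h wv hwv =>
      obtain ⟨v, hv, c, hc0, hcv⟩ := surj_key n wv hwv
      refine ⟨Quotient.mk _ (fun i => Projectivization.mk ℂ (v i) (hv i)), ?_⟩
      have h1 : F (Quotient.mk _ (fun i => Projectivization.mk ℂ (v i) (hv i)))
          = pointsToProj n (fun i => Projectivization.mk ℂ (v i) (hv i)) := rfl
      rw [h1, pointsToProj_mk]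
      refine (Projectivization.mk_eq_mk_iff' ℂ _ _ _ _).mpr ⟨c, hcv.symm⟩
  let e : SymmProd n (ℙ ℂ (Fin 2 → ℂ)) ≃ ℙ ℂ (Fin (n + 1) → ℂ) :=
    Equiv.ofBijective F ⟨hFinj, hFsurj⟩
  exact ⟨Continuous.homeoOfEquivCompactToT2 (f := e) hFcont⟩

end
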